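/- If h ∈ H(T) satisfies h* ∘ i ≤ h and dom(h) = dom(h* ∘ i), and A^∞ h is lower semicontinuous, then A^∞ h is autoconjugate: (A^∞ h)* ∘ i = A^∞ h. -/

import Mathlib

open NormedSpace

noncomputable section

/-- Convexity for extended-real-valued functions. -/
def EConvexOn {E : Type*} [AddCommMonoid E] [Module ℝ E] (f : E → EReal) : Prop :=
  ∀ x y : E, ∀ a b : ℝ, 0 ≤ a → 0 ≤ b → a + b = 1 →
    f (a • x + b • y) ≤ (a : EReal) * f x + (b : EReal) * f y

/-- Properness: somewhere finite and never `⊥` (i.e. values in `ℝ ∪ {+∞}`). -/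
def EProper {E : Type*} (f : E → EReal) : Prop :=
  (∃ x, f x ≠ ⊤) ∧ ∀ x, f x ≠ ⊥

variable {X : Type*} [NormedAddCommGroup X] [NormedSpace ℝ X]

/-- The ε-subdifferential of `f : X → ℝ ∪ {+∞}` at `x`. -/
def epsSubdiff (f : X → EReal) (ε : ℝ) (x : X) : Set (StrongDual ℝ X) :=
  {p | f x ≠ ⊤ ∧ ∀ y : X, f x + ((p (y - x) : ℝ) : EReal) ≤ f y + (ε : EReal)}

/-- The Fenchel conjugate of `f : X → ℝ ∪ {+∞}`. -/
def fconj (f : X → EReal) (p : StrongDual ℝ X) : EReal :=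
  ⨆ y : X, ((p y : ℝ) : EReal) - f y

/-- The duality pairing `⟨x, x*⟩` on `X × X*`. -/
def pairing (z : X × StrongDual ℝ X) : ℝ := z.2 z.1

/-- `h* ∘ i`, the conjugate of `h : X × X* → ℝ ∪ {+∞}` with respect to the pairing
`⟨(x,x*),(y*,y)⟩ = ⟨x,y*⟩ + ⟨y,x*⟩`, composed with the swap `i(x,x*) = (x*,x)`. -/
def conjI (h : X × StrongDual ℝ X → EReal) (z : X × StrongDual ℝ X) : EReal :=
  ⨆ w : X × StrongDual ℝ X, ((z.2 w.1 + w.2 z.1 : ℝ) : EReal) - h w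

/-- The averaging map `A h := (1/2)(h + h* ∘ i)`. -/
def Amap (h : X × StrongDual ℝ X → EReal) : X × StrongDual ℝ X → EReal :=
  fun z => (((1 : ℝ)/2 : ℝ) : EReal) * (h z + conjI h z)

/-- Monotone multivalued operator `T : X ⇉ X*`. -/
def IsMonotoneOp (T : X → Set (StrongDual ℝ X)) : Prop :=
  ∀ ⦃x p y q⦄, p ∈ T x → q ∈ T y → 0 ≤ (p - q) (x - y)

/-- Maximally monotone operator. -/
def IsMaxMonotoneOp (T : X → Set (StrongDual ℝ X)) : Prop :=
  IsMonotoneOp T ∧ ∀ x p, (∀ y q, q ∈ T y → 0 ≤ (p - q) (x - y)) → p ∈ T x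

/-- The Fitzpatrick family `H(T)`: lsc convex `h ≥ ⟨·,·⟩` with equality on `gph T`. -/
def InFitzFamily (T : X → Set (StrongDual ℝ X)) (h : X × StrongDual ℝ X → EReal) : Prop :=
  LowerSemicontinuous h ∧ EConvexOn h ∧ (∀ z, (pairing z : EReal) ≤ h z) ∧
    ∀ x p, p ∈ T x → h (x, p) = (pairing (x, p) : EReal)

/-- The δ-subdifferential of `h : X × X* → ℝ ∪ {+∞}` with respect to the pairing
`⟨(x,x*),(y*,y)⟩ = ⟨x,y*⟩ + ⟨y,x*⟩`. -/
def epsSubdiff2 (h : X × StrongDual ℝ X → EReal) (δ : ℝ) (z : X × StrongDual ℝ X) :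
    Set (StrongDual ℝ X × X) :=
  {w | h z ≠ ⊤ ∧ ∀ u : X × StrongDual ℝ X,
    h z + ((w.1 (u.1 - z.1) + (u.2 - z.2) w.2 : ℝ) : EReal) ≤ h u + (δ : EReal)}

/-- The Fenchel–Young function `f^{FY}(x,x*) = f(x) + f*(x*)`. -/
def FYfn (f : X → EReal) (z : X × StrongDual ℝ X) : EReal := f z.1 + fconj f z.2

/-- The pointwise limit `A^∞ h` of the non-increasing sequence `{Aⁿh}_{n ≥ 1}`,
realized as a pointwise infimum. -/
def AinfMap (h : X × StrongDual ℝ X → EReal) (z : X × StrongDual ℝ X) : EReal :=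
  ⨅ n : ℕ, Amap^[n + 1] h z

/-! ### Auxiliary lemmas for statement12 -/


lemma ereal_sub_swap {a : ℝ} {b c : EReal} (h : (a : EReal) - c ≤ b) : (a : EReal) - b ≤ c := by
  induction c with
  | bot =>
      rw [EReal.coe_sub_bot] at h
      rw [top_le_iff.mp h]
      simp
  | coe c =>
      calc (a : EReal) - b ≤ (a : EReal) - ((a : EReal) - (c : EReal)) :=
            EReal.sub_le_sub le_rfl h
        _ = (c : EReal) := by norm_cast; ring
  | top => exact le_top

lemma ereal_sub_iInf_le (a : ℝ) (b : ℕ → EReal) :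
    (a : EReal) - ⨅ n, b n ≤ ⨆ n, ((a : EReal) - b n) := by
  apply ereal_sub_swap
  refine le_iInf fun n => ?_
  exact ereal_sub_swap (le_iSup (fun n => (a : EReal) - b n) n)


/-- The symmetric pairing between `X × X*` and itself used in `conjI`. -/
def pairW (z w : X × StrongDual ℝ X) : ℝ := z.2 w.1 + w.2 z.1

lemma pairW_symm (z w : X × StrongDual ℝ X) : pairW z w = pairW w z := by
  simp [pairW, add_comm]

lemma conjI_eq (f : X × StrongDual ℝ X → EReal) (z : X × StrongDual ℝ X) :
    conjI f z = ⨆ w, ((pairW z w : ℝ) : EReal) - f w := rfl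

lemma le_conjI (f : X × StrongDual ℝ X → EReal) (z w : X × StrongDual ℝ X) :
    ((pairW z w : ℝ) : EReal) - f w ≤ conjI f z := by
  rw [conjI_eq]
  exact le_iSup (fun w => ((pairW z w : ℝ) : EReal) - f w) w

lemma conjI_le {f : X × StrongDual ℝ X → EReal} {z : X × StrongDual ℝ X} {b : EReal}
    (h : ∀ w, ((pairW z w : ℝ) : EReal) - f w ≤ b) : conjI f z ≤ b := by
  rw [conjI_eq]; exact iSup_le h

lemma conjI_anti {f g : X × StrongDual ℝ X → EReal} (h : ∀ w, f w ≤ g w)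
    (z : X × StrongDual ℝ X) : conjI g z ≤ conjI f z := by
  rw [conjI_eq, conjI_eq]
  exact iSup_mono fun w => EReal.sub_le_sub le_rfl (h w)

lemma sub_conjI_le (f : X × StrongDual ℝ X → EReal) (z w : X × StrongDual ℝ X) :
    ((pairW z w : ℝ) : EReal) - conjI f w ≤ f z := by
  apply ereal_sub_swap
  rw [pairW_symm]
  exact le_conjI f w z

lemma conjI_ne_bot {f : X × StrongDual ℝ X → EReal} {z0 : X × StrongDual ℝ X}
    (h0 : f z0 ≠ ⊤) (h0' : f z0 ≠ ⊥) (z : X × StrongDual ℝ X) : conjI f z ≠ ⊥ := by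
  have h1 : ((pairW z z0 : ℝ) : EReal) - f z0 ≤ conjI f z := le_conjI f z z0
  rw [← EReal.coe_toReal h0 h0', ← EReal.coe_sub] at h1
  exact ((EReal.bot_lt_coe _).trans_le h1).ne'

/-- The invariant preserved by the averaging map. -/
def GoodF (h f : X × StrongDual ℝ X → EReal) : Prop :=
  (∀ z, (pairing z : EReal) ≤ f z) ∧ (∀ z, conjI f z ≤ f z) ∧
    (∀ z, f z = ⊤ ↔ h z = ⊤) ∧ (∀ z, conjI f z = ⊤ ↔ h z = ⊤)


lemma goodF_step {h f : X × StrongDual ℝ X → EReal} (hp : EProper h) (G : GoodF h f) :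
    GoodF h (Amap f) ∧ ∀ z, Amap f z ≤ f z := by
  obtain ⟨Gp, Gc, Gd, Gcd⟩ := G
  obtain ⟨z0, hz0⟩ := hp.1
  have hfz0t : f z0 ≠ ⊤ := fun h' => hz0 ((Gd z0).mp h')
  have hfb : ∀ z, f z ≠ ⊥ := fun z hb => by
    have := Gp z; rw [hb] at this; exact (EReal.bot_lt_coe _).not_ge this
  have hcb : ∀ z, conjI f z ≠ ⊥ := conjI_ne_bot hfz0t (hfb z0)
  have half_pos : (0 : EReal) < (((1:ℝ)/2 : ℝ) : EReal) := EReal.coe_pos.2 (by norm_num)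
  have hreal : ∀ z, f z ≠ ⊤ → ∃ r s : ℝ, f z = (r : EReal) ∧ conjI f z = (s : EReal) ∧ s ≤ r := by
    intro z hz
    have hct : conjI f z ≠ ⊤ := fun h' => hz ((Gd z).mpr ((Gcd z).mp h'))
    refine ⟨(f z).toReal, (conjI f z).toReal, (EReal.coe_toReal hz (hfb z)).symm,
      (EReal.coe_toReal hct (hcb z)).symm, ?_⟩
    have := Gc z
    rw [← EReal.coe_toReal hz (hfb z), ← EReal.coe_toReal hct (hcb z)] at this
    exact EReal.coe_le_coe_iff.mp this
  have htop : ∀ z, f z = ⊤ → Amap f z = ⊤ := by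
    intro z hz
    rw [Amap, hz, EReal.top_add_of_ne_bot (hcb z), EReal.mul_top_of_pos half_pos]
  have hAle : ∀ z, Amap f z ≤ f z := by
    intro z
    by_cases hz : f z = ⊤
    · rw [hz]; exact le_top
    · obtain ⟨r, s, hr, hs, hsr⟩ := hreal z hz
      rw [Amap, hr, hs, ← EReal.coe_add, ← EReal.coe_mul, EReal.coe_le_coe_iff]
      linarith
  have hApair : ∀ z, (pairing z : EReal) ≤ Amap f z := by
    intro z
    by_cases hz : f z = ⊤
    · rw [htop z hz]; exact le_top
    · obtain ⟨r, s, hr, hs, hsr⟩ := hreal z hz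
      have hkey : ((pairW z z : ℝ) : EReal) - f z ≤ conjI f z := le_conjI f z z
      rw [hr, hs, ← EReal.coe_sub, EReal.coe_le_coe_iff] at hkey
      rw [Amap, hr, hs, ← EReal.coe_add, ← EReal.coe_mul, EReal.coe_le_coe_iff]
      have hzz : pairW z z = 2 * pairing z := by simp [pairW, pairing, two_mul]
      rw [hzz] at hkey
      linarith
  have hAdom : ∀ z, Amap f z = ⊤ ↔ h z = ⊤ := by
    intro z
    constructor
    · intro hA
      by_contra hz
      have hft : f z ≠ ⊤ := fun h' => hz ((Gd z).mp h')
      obtain ⟨r, s, hr, hs, -⟩ := hreal z hft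
      rw [Amap, hr, hs, ← EReal.coe_add, ← EReal.coe_mul] at hA
      exact EReal.coe_ne_top _ hA
    · intro hz
      exact htop z ((Gd z).mpr hz)
  have hcA : ∀ z, conjI (Amap f) z ≤ Amap f z := by
    intro z
    apply conjI_le
    intro w
    by_cases hw : f w = ⊤
    · rw [htop w hw]
      simp
    · obtain ⟨r, s, hr, hs, -⟩ := hreal w hw
      have h1 : ((pairW z w - r : ℝ) : EReal) ≤ conjI f z := by
        rw [EReal.coe_sub, ← hr]; exact le_conjI f z w
      have h2 : ((pairW z w - s : ℝ) : EReal) ≤ f z := by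
        rw [EReal.coe_sub, ← hs]; exact sub_conjI_le f z w
      rw [Amap, hr, hs, ← EReal.coe_add, ← EReal.coe_mul, ← EReal.coe_sub]
      calc ((pairW z w - 1/2 * (r + s) : ℝ) : EReal)
          = (((1:ℝ)/2 : ℝ) : EReal) * (((pairW z w - r : ℝ) : EReal) +
              ((pairW z w - s : ℝ) : EReal)) := by
            rw [← EReal.coe_add, ← EReal.coe_mul]
            congr 1
            ring
        _ ≤ (((1:ℝ)/2 : ℝ) : EReal) * (conjI f z + f z) :=
            mul_le_mul_of_nonneg_left (add_le_add h1 h2) half_pos.le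
        _ = Amap f z := by rw [Amap, add_comm (f z)]
  have hcAdom : ∀ z, conjI (Amap f) z = ⊤ ↔ h z = ⊤ := by
    intro z
    constructor
    · intro hc
      exact (hAdom z).mp (top_le_iff.mp (hc ▸ hcA z))
    · intro hz
      have h1 : conjI f z ≤ conjI (Amap f) z := conjI_anti hAle z
      exact top_le_iff.mp (((Gcd z).mpr hz) ▸ h1)
  exact ⟨⟨hApair, hcA, hAdom, hcAdom⟩, hAle⟩

/-- if `h ∈ H(T)`, `h* ∘ i ≤ h`, `dom(h) = dom(h* ∘ i)` and `A^∞ h`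
is lsc, then `A^∞ h` is autoconjugate. -/
theorem statement12 (T : X → Set (StrongDual ℝ X)) (hT : IsMaxMonotoneOp T)
    (h : X × StrongDual ℝ X → EReal) (hF : InFitzFamily T h) (hproper : EProper h)
    (hle : ∀ z, conjI h z ≤ h z)
    (hdom : {z : X × StrongDual ℝ X | h z ≠ ⊤} = {z | conjI h z ≠ ⊤})
    (hlscA : LowerSemicontinuous (AinfMap h)) :
    ∀ z : X × StrongDual ℝ X, conjI (AinfMap h) z = AinfMap h z := by
  have hdom' : ∀ z, conjI h z = ⊤ ↔ h z = ⊤ := by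
    intro z
    have := Set.ext_iff.mp hdom z
    simp only [Set.mem_setOf_eq] at this
    exact not_iff_not.mp this.symm
  have G0 : GoodF h h := ⟨hF.2.2.1, hle, fun z => Iff.rfl, hdom'⟩
  have Gn : ∀ n, GoodF h (Amap^[n] h) := by
    intro n
    induction n with
    | zero => simpa using G0
    | succ n ih =>
        rw [Function.iterate_succ_apply']
        exact (goodF_step hproper ih).1
  have step_le : ∀ n z, Amap^[n+1] h z ≤ Amap^[n] h z := by
    intro n z
    rw [Function.iterate_succ_apply']
    exact (goodF_step hproper (Gn n)).2 z
  have anti : ∀ z, Antitone (fun n => Amap^[n] h z) :=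
    fun z => antitone_nat_of_succ_le (fun n => step_le n z)
  have g_le : ∀ n z, AinfMap h z ≤ Amap^[n+1] h z := fun n z => iInf_le _ n
  have key1 : ∀ n z, conjI (Amap^[n+1] h) z ≤ AinfMap h z := by
    intro n z
    refine le_iInf fun m => ?_
    rcases le_total (n+1) (m+1) with hnm | hnm
    · exact (conjI_anti (fun w => anti w hnm) z).trans ((Gn (m+1)).2.1 z)
    · exact ((Gn (n+1)).2.1 z).trans (anti z hnm)
  have key2 : ∀ n z, conjI (Amap^[n+1] h) z ≤ conjI (AinfMap h) z :=
    fun n z => conjI_anti (fun w => g_le n w) z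
  have dir1 : ∀ z, conjI (AinfMap h) z ≤ AinfMap h z := by
    intro z
    apply conjI_le
    intro w
    have hsw : ((pairW z w : ℝ) : EReal) - AinfMap h w ≤
        ⨆ n, (((pairW z w : ℝ) : EReal) - Amap^[n+1] h w) :=
      ereal_sub_iInf_le (pairW z w) (fun n => Amap^[n+1] h w)
    refine hsw.trans (iSup_le fun n => ?_)
    exact (le_conjI (Amap^[n+1] h) z w).trans (key1 n z)
  have dir2 : ∀ z, AinfMap h z ≤ conjI (AinfMap h) z := by
    intro z
    by_cases hz : h z = ⊤
    · have htop1 : conjI (Amap^[0+1] h) z = ⊤ := ((Gn 1).2.2.2 z).mpr hz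
      calc AinfMap h z ≤ ⊤ := le_top
        _ = conjI (Amap^[0+1] h) z := htop1.symm
        _ ≤ conjI (AinfMap h) z := key2 0 z
    · by_contra hcon
      push_neg at hcon
      obtain ⟨z0, hz0⟩ := hproper.1
      have hGt : ∀ n, Amap^[n] h z ≠ ⊤ := fun n h' => hz (((Gn n).2.2.1 z).mp h')
      have hGb : ∀ n, Amap^[n] h z ≠ ⊥ := fun n h' => by
        have := (Gn n).1 z; rw [h'] at this; exact (EReal.bot_lt_coe _).not_ge this
      have hCt : ∀ n, conjI (Amap^[n] h) z ≠ ⊤ := fun n h' => hz (((Gn n).2.2.2 z).mp h')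
      have hCb : ∀ n, conjI (Amap^[n] h) z ≠ ⊥ := by
        intro n
        have h0t : Amap^[n] h z0 ≠ ⊤ := fun h' => hz0 (((Gn n).2.2.1 z0).mp h')
        have h0b : Amap^[n] h z0 ≠ ⊥ := fun h' => by
          have := (Gn n).1 z0; rw [h'] at this; exact (EReal.bot_lt_coe _).not_ge this
        exact conjI_ne_bot h0t h0b z
      set a : ℕ → ℝ := fun n => (Amap^[n+1] h z).toReal with ha
      set b : ℕ → ℝ := fun n => (conjI (Amap^[n+1] h) z).toReal with hb
      have haco : ∀ n, ((a n : ℝ) : EReal) = Amap^[n+1] h z :=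
        fun n => EReal.coe_toReal (hGt (n+1)) (hGb (n+1))
      have hbco : ∀ n, ((b n : ℝ) : EReal) = conjI (Amap^[n+1] h) z :=
        fun n => EReal.coe_toReal (hCt (n+1)) (hCb (n+1))
      have hMb : conjI (AinfMap h) z ≠ ⊥ := fun h' => by
        have hk := key2 0 z; rw [h'] at hk; exact (hCb 1) (le_bot_iff.mp hk)
      have hMt : conjI (AinfMap h) z ≠ ⊤ := fun h' => by
        rw [h'] at hcon; exact (not_top_lt hcon)
      set M : ℝ := (conjI (AinfMap h) z).toReal with hMdef
      have hMco : ((M : ℝ) : EReal) = conjI (AinfMap h) z := EReal.coe_toReal hMt hMb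
      have hbM : ∀ n, b n ≤ M := by
        intro n
        have hk := key2 n z
        rw [← hbco n, ← hMco] at hk
        exact EReal.coe_le_coe_iff.mp hk
      obtain ⟨r, hMr, hrg⟩ := EReal.exists_between_coe_real hcon
      have hMr' : M < r := by
        rw [← hMco] at hMr
        exact EReal.coe_lt_coe_iff.mp hMr
      have hra : ∀ n, r < a n := by
        intro n
        have hk := hrg.trans_le (g_le n z)
        rw [← haco n] at hk
        exact EReal.coe_lt_coe_iff.mp hk
      have hrec : ∀ n, a (n+1) = 1/2 * (a n + b n) := by
        intro n
        have h1 : Amap^[n+1+1] h z = Amap (Amap^[n+1] h) z := by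
          rw [Function.iterate_succ_apply']
        have h2 : ((a (n+1) : ℝ) : EReal) = ((1/2 * (a n + b n) : ℝ) : EReal) := by
          rw [haco (n+1), h1, Amap, ← haco n, ← hbco n, ← EReal.coe_add, ← EReal.coe_mul]
        exact_mod_cast h2
      have hdecay : ∀ n, a n - M ≤ (a 0 - M) * (1/2)^n := by
        intro n
        induction n with
        | zero => simp
        | succ n ih =>
            have hb' := hbM n
            have hmul : (a n - M) * (1/2) ≤ ((a 0 - M) * (1/2)^n) * (1/2) :=
              mul_le_mul_of_nonneg_right ih (by norm_num)
            rw [hrec n]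
            calc 1/2 * (a n + b n) - M ≤ 1/2 * (a n + M) - M := by linarith
              _ = (a n - M) * (1/2) := by ring
              _ ≤ ((a 0 - M) * (1/2)^n) * (1/2) := hmul
              _ = (a 0 - M) * (1/2)^(n+1) := by ring
      have ha0M : 0 < a 0 - M := sub_pos.mpr (hMr'.trans (hra 0))
      have hrM : 0 < r - M := sub_pos.mpr hMr'
      obtain ⟨n, hn⟩ := exists_pow_lt_of_lt_one (div_pos hrM ha0M) (by norm_num : (1:ℝ)/2 < 1)
      have hlt : ((1:ℝ)/2)^n * (a 0 - M) < r - M := (lt_div_iff₀ ha0M).mp hn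
      have hlt' : (a 0 - M) * (1/2)^n < r - M := by
        rw [mul_comm]; exact hlt
      have := hdecay n
      have := hra n
      linarith
  exact fun z => le_antisymm (dir1 z) (dir2 z)
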